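/- With the notation of Example 2, let A(s,x) = x(σ a s λ - 2 λ a s - c exp(-ζ s)), B(s) = 2 λ a s (1 + 2a), D(s) = σ λ a s - 2 λ a s - c exp(-ζ s), E(s,x) = p exp(-ζ s) + 2 λ a s x + 4 λ a² s x. If D(s) ≠ 0, then u* := (1/D(s))·[A(s,x) B(s)²/(2 D(s)) - E(s,x)] satisfies the first-order equation (∂_u f)·(∂_{xx} f)² = 2(∂_x f)·(∂_{xu} f) evaluated at (s, x, u*), where f is the function of the previous statement. -/

import Mathlib

lemma deriv_quad (p q r t : ℝ) :
    deriv (fun y : ℝ => p * y ^ 2 + q * y + r) t = 2 * p * t + q := by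
  have h := (((hasDerivAt_pow 2 t).const_mul p).add
      (((hasDerivAt_id t).const_mul q).add_const r))
  have h2 : HasDerivAt (fun y : ℝ => p * y ^ 2 + q * y + r) (2 * p * t + q) t := by
    convert h using 1
    · rfl
    · rfl
    · funext y; simp [id]; ring
    · push_cast; ring
  exact h2.deriv

theorem example2_optimal_strategy (ζ p c lam a b σ : ℝ) (f : ℝ → ℝ → ℝ → ℝ)
    (hf : ∀ s x u, f s x u =
      x * Real.exp (-ζ * s) * (p - c * u) + s * lam * (a * x ^ 2 - b) +
        2 * s * lam * a * x * (a * x - u) + lam * σ * a * s * u * x)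
    (s x : ℝ)
    (A B D E ustar : ℝ)
    (hA : A = x * (σ * a * s * lam - 2 * lam * a * s - c * Real.exp (-ζ * s)))
    (hB : B = 2 * lam * a * s * (1 + 2 * a))
    (hD : D = σ * lam * a * s - 2 * lam * a * s - c * Real.exp (-ζ * s))
    (hE : E = p * Real.exp (-ζ * s) + 2 * lam * a * s * x + 4 * lam * a ^ 2 * s * x)
    (hDne : D ≠ 0)
    (hu : ustar = (1 / D) * (A * B ^ 2 / (2 * D) - E)) :
    deriv (fun w => f s x w) ustar *
        (deriv (fun y => deriv (fun z => f s z ustar) y) x) ^ 2 =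
      2 * deriv (fun y => f s y ustar) x *
        deriv (fun w => deriv (fun y => f s y w) x) ustar := by
  set e := Real.exp (-ζ * s) with he
  -- ∂_u f at (s,x,·)
  have h1 : deriv (fun w => f s x w) ustar = A := by
    have heq : (fun w => f s x w)
        = fun w => (0 : ℝ) * w ^ 2 +
            (-(x * e * c) - 2 * s * lam * a * x + lam * σ * a * s * x) * w +
            (x * e * p + s * lam * (a * x ^ 2 - b) + 2 * s * lam * a * x * (a * x)) := by
      funext w; rw [hf]; ring
    rw [heq, deriv_quad, hA]; ring
  -- ∂_x f at (s,·,u) for any u, as explicit quadratic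
  have hxf : ∀ u : ℝ, deriv (fun y => f s y u) = fun y =>
      2 * (s * lam * a + 2 * s * lam * a * a) * y +
        (e * (p - c * u) - 2 * s * lam * a * u + lam * σ * a * s * u) := by
    intro u
    funext y
    have heq : (fun z => f s z u)
        = fun z => (s * lam * a + 2 * s * lam * a * a) * z ^ 2 +
            (e * (p - c * u) - 2 * s * lam * a * u + lam * σ * a * s * u) * z +
            (-(s * lam * b)) := by
      funext z; rw [hf]; ring
    rw [heq, deriv_quad]
  have h2 : deriv (fun y => deriv (fun z => f s z ustar) y) x
      = 2 * (s * lam * a + 2 * s * lam * a * a) := by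
    rw [hxf ustar]
    have heq : (fun y : ℝ => 2 * (s * lam * a + 2 * s * lam * a * a) * y +
        (e * (p - c * ustar) - 2 * s * lam * a * ustar + lam * σ * a * s * ustar))
        = fun y => (0 : ℝ) * y ^ 2 + (2 * (s * lam * a + 2 * s * lam * a * a)) * y +
            (e * (p - c * ustar) - 2 * s * lam * a * ustar + lam * σ * a * s * ustar) := by
      funext y; ring
    rw [heq, deriv_quad]; ring
  have h3 : deriv (fun y => f s y ustar) x = E + ustar * D := by
    rw [hxf ustar, hE, hD]; ring
  have h4 : deriv (fun w => deriv (fun y => f s y w) x) ustar = D := by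
    have heq : (fun w => deriv (fun y => f s y w) x)
        = fun w => (0 : ℝ) * w ^ 2 + (-(e * c) - 2 * s * lam * a + lam * σ * a * s) * w +
            (2 * (s * lam * a + 2 * s * lam * a * a) * x + e * p) := by
      funext w; rw [hxf w]; ring
    rw [heq, deriv_quad, hD]; ring
  rw [h1, h2, h3, h4]
  have hB' : 2 * (s * lam * a + 2 * s * lam * a * a) = B := by rw [hB]; ring
  rw [hB']
  have key : E + ustar * D = A * B ^ 2 / (2 * D) := by
    rw [hu]; field_simp; ring
  rw [key]; field_simp
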